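/- Even a restricted sector of the wave front becomes dense on the flat torus: for any nondegenerate arc A = {(cos s, sin s) : s ∈ [α, β]} with α < β, and any P ∈ ℝ², the sets W_t(P, A) = image in ℝ²/ℤ² of {P + t·a : a ∈ A} become dense: for every ball B in the torus there is τ with W_t(P,A) ∩ B ≠ ∅ for all t > τ. -/

import Mathlib

/-- Euclidean distance on `ℝ × ℝ`. -/
noncomputable def eDist (a b : ℝ × ℝ) : ℝ :=
  Real.sqrt ((a.1 - b.1) ^ 2 + (a.2 - b.2) ^ 2)

open Real Set
set_option maxHeartbeats 1000000

lemma exists_int_shift (r u v : ℝ) (h : u + 1 ≤ v) : ∃ m : ℤ, r + m ∈ Set.Icc u v := by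
  refine ⟨⌈u - r⌉, ?_, ?_⟩
  · have := Int.le_ceil (u - r); linarith
  · have := Int.ceil_lt_add_one (u - r); linarith

lemma abs_sin_sub_le (x y : ℝ) : |Real.sin x - Real.sin y| ≤ |x - y| := by
  rw [Real.sin_sub_sin]
  have h1 : |Real.sin ((x - y)/2)| ≤ |(x - y)/2| := Real.abs_sin_le_abs
  have h2 : |Real.cos ((x + y)/2)| ≤ 1 := Real.abs_cos_le_one _
  calc |2 * Real.sin ((x - y) / 2) * Real.cos ((x + y) / 2)|
      = 2 * |Real.sin ((x - y)/2)| * |Real.cos ((x + y)/2)| := by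
        rw [abs_mul, abs_mul]; simp
    _ ≤ 2 * |(x - y)/2| * 1 := by
        apply mul_le_mul (by nlinarith [abs_nonneg (Real.sin ((x-y)/2))]) h2 (abs_nonneg _)
        positivity
    _ = |x - y| := by rw [abs_div]; simp; ring

lemma abs_cos_sub_le (x y : ℝ) : |Real.cos x - Real.cos y| ≤ |x - y| := by
  rw [Real.cos_sub_cos]
  have h1 : |Real.sin ((x - y)/2)| ≤ |(x - y)/2| := Real.abs_sin_le_abs
  have h2 : |Real.sin ((x + y)/2)| ≤ 1 := Real.abs_sin_le_one _
  calc |-2 * Real.sin ((x + y) / 2) * Real.sin ((x - y) / 2)|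
      = 2 * |Real.sin ((x - y)/2)| * |Real.sin ((x + y)/2)| := by
        rw [abs_mul, abs_mul]; simp [abs_of_nonpos]; ring
    _ ≤ 2 * |(x - y)/2| * 1 := by
        apply mul_le_mul (by nlinarith [abs_nonneg (Real.sin ((x-y)/2))]) h2 (abs_nonneg _)
        positivity
    _ = |x - y| := by rw [abs_div]; simp; ring

lemma cos_sweep {a b c σ : ℝ} (hsin : ∀ s ∈ Set.Icc a b, c ≤ σ * Real.sin s)
    {x y : ℝ} (hx : x ∈ Set.Icc a b) (hy : y ∈ Set.Icc a b) (hxy : x ≤ y) :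
    c * (y - x) ≤ σ * (Real.cos x - Real.cos y) := by
  rcases eq_or_lt_of_le hxy with rfl | h
  · simp
  · obtain ⟨ζ, hζ, hz⟩ := exists_hasDerivAt_eq_slope Real.cos (fun z => -Real.sin z) h
      Real.continuous_cos.continuousOn (fun z _ => Real.hasDerivAt_cos z)
    have hζm : ζ ∈ Set.Icc a b := ⟨le_trans hx.1 (le_of_lt hζ.1), le_trans (le_of_lt hζ.2) hy.2⟩
    have hcs := hsin ζ hζm
    have hxy' : y - x ≠ 0 := by linarith
    rw [eq_div_iff hxy'] at hz
    have h3 : σ * (Real.cos x - Real.cos y) = (σ * Real.sin ζ) * (y - x) := by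
      rw [show Real.cos x - Real.cos y = Real.sin ζ * (y - x) from by linarith]; ring
    have h4 := mul_le_mul_of_nonneg_right hcs (le_of_lt (sub_pos.mpr h))
    linarith

lemma cot_sub {x y : ℝ} (hx : Real.sin x ≠ 0) (hy : Real.sin y ≠ 0) :
    Real.cos x / Real.sin x - Real.cos y / Real.sin y
      = Real.sin (y - x) / (Real.sin x * Real.sin y) := by
  rw [Real.sin_sub]; field_simp

lemma sin_step {a b c σ t : ℝ} (hc : 0 < c) (ht : 0 < t)
    (hsin : ∀ s ∈ Set.Icc a b, c ≤ σ * Real.sin s)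
    {x y : ℝ} (hx : x ∈ Set.Icc a b) (hy : y ∈ Set.Icc a b) (hxy : x < y)
    (hcos : t * Real.cos y = t * Real.cos x - σ) :
    ∃ ξ ∈ Set.Icc a b, x ≤ ξ ∧ ξ ≤ y ∧
      t * Real.sin y - t * Real.sin x = σ * (Real.cos ξ / Real.sin ξ) := by
  obtain ⟨ξ, hξ, hmvt⟩ := exists_ratio_hasDerivAt_eq_ratio_slope Real.sin Real.cos hxy
      Real.continuous_sin.continuousOn (fun z _ => Real.hasDerivAt_sin z)
      Real.cos (fun z => -Real.sin z)
      Real.continuous_cos.continuousOn (fun z _ => Real.hasDerivAt_cos z)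
  have hξJ : ξ ∈ Set.Icc a b := ⟨le_trans hx.1 (le_of_lt hξ.1), le_trans (le_of_lt hξ.2) hy.2⟩
  have hsξ := hsin ξ hξJ
  have hsne : Real.sin ξ ≠ 0 := by
    intro h0; rw [h0, mul_zero] at hsξ; linarith
  refine ⟨ξ, hξJ, le_of_lt hξ.1, le_of_lt hξ.2, ?_⟩
  have h2 : σ * Real.cos ξ = (t * Real.sin y - t * Real.sin x) * Real.sin ξ := by
    linear_combination Real.cos ξ * hcos - t * hmvt
  rw [mul_div_assoc', eq_div_iff hsne]
  linarith [h2]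

theorem sector_waveFront_dense (α β : ℝ) (hαβ : α < β) (P : ℝ × ℝ) :
    ∀ Q : ℝ × ℝ, ∀ ε : ℝ, ε > 0 → ∃ τ : ℝ, ∀ t : ℝ, t > τ →
      ∃ s ∈ Set.Icc α β, ∃ m n : ℤ,
        eDist (P.1 + t * Real.cos s + (m : ℝ),
          P.2 + t * Real.sin s + (n : ℝ)) Q < ε := by
  intro Q ε hε
  -- Step 1: a point of (α, β) where sin ≠ 0
  obtain ⟨s₁, hs1α, hs1β, hs1⟩ : ∃ s, α < s ∧ s < β ∧ Real.sin s ≠ 0 := by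
    obtain ⟨d, hd_def⟩ : ∃ x : ℝ, x = min ((β - α)/4) 1 := ⟨_, rfl⟩
    have hd0 : 0 < d := by rw [hd_def]; exact lt_min (by linarith) one_pos
    have hd1 : d ≤ 1 := by rw [hd_def]; exact min_le_right _ _
    have hd2 : d ≤ (β - α)/4 := by rw [hd_def]; exact min_le_left _ _
    by_cases h : Real.sin ((α+β)/2) ≠ 0
    · exact ⟨(α+β)/2, by linarith, by linarith, h⟩
    · push_neg at h
      refine ⟨(α+β)/2 + d, by linarith, by linarith, ?_⟩
      intro h2
      rw [Real.sin_eq_zero_iff] at h h2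
      obtain ⟨n, hn⟩ := h
      obtain ⟨m, hm⟩ := h2
      have hpi := Real.pi_gt_three
      have hpi0 := Real.pi_pos
      have hd3 : ((m:ℝ) - n) * π = d := by push_cast at hn hm ⊢; linarith
      have h4 : (0:ℝ) < (m:ℝ) - (n:ℝ) := by nlinarith
      have h5 : ((m:ℝ)) - n < 1 := by nlinarith
      have h4' : (0:ℤ) < m - n := by exact_mod_cast (by push_cast; linarith : (0:ℝ) < ((m - n : ℤ):ℝ))
      have h5' : (m - n : ℤ) < 1 := by exact_mod_cast (by push_cast; linarith : ((m - n : ℤ):ℝ) < 1)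
      omega
  -- Step 2: the interval J = [a, b]
  obtain ⟨c, hc_def⟩ : ∃ x : ℝ , x = |Real.sin s₁| / 2 := ⟨_, rfl⟩
  have hc : 0 < c := by
    have := abs_pos.mpr hs1; simp only [hc_def]; linarith
  have hc2 : c ≤ 1 / 2 := by
    have := Real.abs_sin_le_one s₁; simp only [hc_def]; linarith
  obtain ⟨σ, hσ_def⟩ : ∃ x : ℤ , x = if 0 < Real.sin s₁ then 1 else -1 := ⟨_, rfl⟩
  have hσ : (σ : ℝ) = 1 ∨ (σ : ℝ) = -1 := by
    by_cases h : 0 < Real.sin s₁ <;> simp [hσ_def, h]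
  have hσσ : (σ : ℝ) * (σ : ℝ) = 1 := by rcases hσ with h | h <;> rw [h] <;> norm_num
  have hσabs : |(σ : ℝ)| = 1 := by rcases hσ with h | h <;> rw [h] <;> norm_num
  have hσs1 : (σ : ℝ) * Real.sin s₁ = 2 * c := by
    rcases lt_trichotomy 0 (Real.sin s₁) with h | h | h
    · simp only [hσ_def, if_pos h]; push_cast; rw [hc_def, abs_of_pos h]; ring
    · exact absurd h.symm hs1
    · simp only [hσ_def, if_neg (by linarith : ¬ 0 < Real.sin s₁)]
      push_cast
      rw [hc_def, abs_of_neg h]; ring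
  obtain ⟨ℓ, hℓ_def⟩ : ∃ x : ℝ , x = min c (β - s₁) := ⟨_, rfl⟩
  have hℓ : 0 < ℓ := by rw [hℓ_def]; exact lt_min hc (by linarith)
  have hℓc : ℓ ≤ c := by rw [hℓ_def]; exact min_le_left _ _
  obtain ⟨a, ha_def⟩ : ∃ x : ℝ , x = s₁ := ⟨_, rfl⟩
  obtain ⟨b, hb_def⟩ : ∃ x : ℝ , x = s₁ + ℓ := ⟨_, rfl⟩
  have hJαβ : Set.Icc a b ⊆ Set.Icc α β := by
    have h1 : ℓ ≤ β - s₁ := by rw [hℓ_def]; exact min_le_right _ _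
    rw [ha_def, hb_def]
    exact Set.Icc_subset_Icc (le_of_lt hs1α) (by linarith)
  have hsin : ∀ s ∈ Set.Icc a b, c ≤ (σ : ℝ) * Real.sin s := by
    intro s hs
    have h1 : |Real.sin s - Real.sin s₁| ≤ |s - s₁| := abs_sin_sub_le s s₁
    have h2 : |s - s₁| ≤ ℓ := by
      rw [abs_le]; constructor
      · simp only [ha_def, hb_def] at hs; linarith [hs.1]
      · simp only [ha_def, hb_def] at hs; linarith [hs.2]
    have h3 : (σ : ℝ) * Real.sin s - 2 * c ≥ -c := by
      have : (σ : ℝ) * Real.sin s - (σ:ℝ) * Real.sin s₁ ≥ -|Real.sin s - Real.sin s₁| := by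
        rcases hσ with h | h <;> rw [h] <;>
          [skip; skip] <;> cases abs_cases (Real.sin s - Real.sin s₁) <;> nlinarith [abs_nonneg (Real.sin s - Real.sin s₁)]
      linarith [hσs1 ▸ this, le_trans h1 h2, hℓc]
    linarith
  have hsinne : ∀ s ∈ Set.Icc a b, Real.sin s ≠ 0 := by
    intro s hs h0
    have := hsin s hs; rw [h0] at this; simp at this; linarith
  obtain ⟨W, hW_def⟩ : ∃ x : ℝ , x = ℓ / 3 := ⟨_, rfl⟩
  have hW : 0 < W := by rw [hW_def]; positivity
  -- Step 3: choose q prime, p, and s** with cot s** = p / q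
  obtain ⟨a', ha'_def⟩ : ∃ x : ℝ , x = b - W := ⟨_, rfl⟩
  have haa' : a < a' := by simp only [ha_def, ha'_def, hb_def, hW_def]; linarith
  have ha'J : a' ∈ Set.Icc a b := ⟨le_of_lt haa', by simp only [ha'_def, hW_def]; linarith⟩
  have haJ : a ∈ Set.Icc a b := ⟨le_refl _, by simp only [ha_def, hb_def]; linarith⟩
  have hbJ : b ∈ Set.Icc a b := ⟨by simp only [ha_def, hb_def]; linarith, le_refl _⟩
  obtain ⟨R, hR_def⟩ : ∃ x : ℝ , x = Real.cos a / Real.sin a - Real.cos a' / Real.sin a' := ⟨_, rfl⟩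
  have hprod : ∀ x ∈ Set.Icc a b, ∀ y ∈ Set.Icc a b, c^2 ≤ Real.sin x * Real.sin y := by
    intro x hx y hy
    have h1 := hsin x hx; have h2 := hsin y hy
    have : ((σ:ℝ) * Real.sin x) * ((σ:ℝ) * Real.sin y) = Real.sin x * Real.sin y := by
      rw [show ((σ:ℝ) * Real.sin x) * ((σ:ℝ) * Real.sin y) = ((σ:ℝ)*(σ:ℝ)) * (Real.sin x * Real.sin y) from by ring, hσσ, one_mul]
    nlinarith
  have hR : 0 < R := by
    rw [hR_def, cot_sub (hsinne a haJ) (hsinne a' ha'J)]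
    have h1 : 0 < Real.sin (a' - a) := by
      apply Real.sin_pos_of_pos_of_lt_pi
      · linarith
      · have : a' - a = 2 * W := by simp only [ha_def, ha'_def, hb_def, hW_def]; ring
        rw [this]
        calc 2 * W ≤ ℓ := by simp only [hW_def]; linarith
          _ ≤ 1/2 := by linarith
          _ < π := by linarith [Real.pi_gt_three]
    have h2 : 0 < Real.sin a * Real.sin a' := lt_of_lt_of_le (by positivity) (hprod a haJ a' ha'J)
    positivity
  obtain ⟨q, hqge, hqprime⟩ := Nat.exists_infinite_primes (⌈max (2/R) (8/ε)⌉₊ + 1)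
  have hq2 : 2 ≤ q := hqprime.two_le
  have hq0 : (0:ℝ) < q := by positivity
  have hqmax : max (2/R) (8/ε) ≤ (q:ℝ) := by
    calc max (2/R) (8/ε) ≤ (⌈max (2/R) (8/ε)⌉₊ : ℝ) := Nat.le_ceil _
      _ ≤ (q:ℝ) := by exact_mod_cast le_trans (Nat.le_succ _) hqge
  have hqR : 2 ≤ (q:ℝ) * R := by
    have h1 : 2/R ≤ (q:ℝ) := le_trans (le_max_left _ _) hqmax
    rw [div_le_iff₀ hR] at h1; linarith
  have hqε : 8/ε ≤ (q:ℝ) := le_trans (le_max_right _ _) hqmax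
  obtain ⟨p₀, hp₀_def⟩ : ∃ x : ℤ , x = ⌈(q:ℝ) * (Real.cos a' / Real.sin a')⌉ := ⟨_, rfl⟩
  obtain ⟨p, hpnd, hp1, hp2⟩ : ∃ p : ℤ, ¬ (q:ℤ) ∣ p ∧
      Real.cos a' / Real.sin a' ≤ (p:ℝ)/q ∧ (p:ℝ)/q ≤ Real.cos a / Real.sin a := by
    have hbounds : ∀ p' : ℤ, (p₀ : ℤ) ≤ p' → p' ≤ p₀ + 1 →
        Real.cos a' / Real.sin a' ≤ (p':ℝ)/q ∧ (p':ℝ)/q ≤ Real.cos a / Real.sin a := by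
      intro p' hlo hhi
      have h1 : (q:ℝ) * (Real.cos a' / Real.sin a') ≤ (p₀:ℝ) := by
        rw [hp₀_def]; exact Int.le_ceil _
      have h1' : (p₀:ℝ) < (q:ℝ) * (Real.cos a' / Real.sin a') + 1 := by
        rw [hp₀_def]; exact Int.ceil_lt_add_one _
      have hlo' : (p₀:ℝ) ≤ (p':ℝ) := by exact_mod_cast hlo
      have hhi' : (p':ℝ) ≤ (p₀:ℝ) + 1 := by exact_mod_cast hhi
      have h3 : (q:ℝ) * (Real.cos a / Real.sin a) = (q:ℝ) * (Real.cos a' / Real.sin a') + (q:ℝ) * R := by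
        simp only [hR_def]; ring
      constructor
      · rw [le_div_iff₀ hq0]; nlinarith
      · rw [div_le_iff₀ hq0]; nlinarith
    by_cases hdvd : (q:ℤ) ∣ p₀
    · refine ⟨p₀ + 1, ?_, hbounds (p₀+1) (by omega) (by omega)⟩
      intro h2
      have : (q:ℤ) ∣ 1 := (Int.dvd_add_right hdvd).mp h2
      have := Int.le_of_dvd one_pos this
      omega
    · exact ⟨p₀, hdvd, hbounds p₀ (le_refl _) (by omega)⟩
  obtain ⟨s₂, hs₂mem, hs₂⟩ : ∃ s ∈ Set.Icc a a', Real.cos s / Real.sin s = (p:ℝ)/q := by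
    have hsub : Set.Icc a a' ⊆ Set.Icc a b := Set.Icc_subset_Icc (le_refl _) ha'J.2
    have hcont : ContinuousOn (fun s => Real.cos s / Real.sin s) (Set.Icc a a') :=
      ContinuousOn.div Real.continuous_cos.continuousOn Real.continuous_sin.continuousOn
        (fun s hs => hsinne s (hsub hs))
    have := intermediate_value_Icc' (le_of_lt haa') hcont
    have hmem : (p:ℝ)/q ∈ Set.Icc (Real.cos a' / Real.sin a') (Real.cos a / Real.sin a) := ⟨hp1, hp2⟩
    obtain ⟨s, hs, hseq⟩ := this hmem
    exact ⟨s, hs, hseq⟩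
  have hs₂J : s₂ ∈ Set.Icc a b := (Set.Icc_subset_Icc (le_refl _) ha'J.2) hs₂mem
  -- Step 4: τ
  obtain ⟨κ₀, hκ₀_def⟩ : ∃ x : ℝ , x = ((q:ℝ) * c + 2) / c^4 := ⟨_, rfl⟩
  have hκ₀ : 0 < κ₀ := by rw [hκ₀_def]; positivity
  refine ⟨4/(c*W) + 2*(q:ℝ)/(c*W) + 2*(q:ℝ)*κ₀/ε + 1, ?_⟩
  intro t ht
  have hP1 : (0:ℝ) < 4/(c*W) := div_pos (by norm_num) (mul_pos hc hW)
  have hP2 : (0:ℝ) < 2*(q:ℝ)/(c*W) := div_pos (by positivity) (mul_pos hc hW)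
  have hP3 : (0:ℝ) < 2*(q:ℝ)*κ₀/ε :=
    div_pos (by nlinarith [mul_pos hq0 hκ₀]) hε
  have ht0 : 0 < t := by linarith
  obtain ⟨w, hw_def⟩ : ∃ x : ℝ , x = 2/(t*c) := ⟨_, rfl⟩
  have hw0 : 0 < w := by rw [hw_def]; exact div_pos (by norm_num) (mul_pos ht0 hc)
  have htA : 4/(c*W) < t := by linarith
  have htB : 2*(q:ℝ)/(c*W) < t := by linarith
  have htC : 2*(q:ℝ)*κ₀/ε < t := by linarith
  have hwW : w ≤ W/2 := by
    rw [hw_def, div_le_div_iff₀ (mul_pos ht0 hc) (by norm_num : (0:ℝ) < 2)]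
    rw [div_lt_iff₀ (mul_pos hc hW)] at htA
    nlinarith
  have hsweep : (q:ℝ) ≤ t*c*(W - w) := by
    rw [div_lt_iff₀ (mul_pos hc hW)] at htB
    have hww : t * c * w = 2 := by
      rw [hw_def]; field_simp
    nlinarith [mul_pos ht0 hc]
  have hEt : (q:ℝ) * κ₀ / t ≤ ε/2 := by
    rw [div_lt_iff₀ hε] at htC
    rw [div_le_iff₀ ht0]
    nlinarith [mul_pos hq0 hκ₀]
  -- Step 5: find s₀ with exact first coordinate mod 1
  have hs₂a' : s₂ ≤ a' := hs₂mem.2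
  have ha'wb : a' + W ≤ b := by simp only [ha'_def]; linarith
  have hs₂w_sub : Set.Icc s₂ (s₂ + w) ⊆ Set.Icc a b := by
    intro s hs
    exact ⟨le_trans hs₂J.1 hs.1, by linarith only [hs.2, hwW, hW, hs₂a', ha'wb]⟩
  have hs₂wJ : s₂ + w ∈ Set.Icc a b := hs₂w_sub ⟨by linarith only [hw0], le_refl _⟩
  have hgap : 2 ≤ |(P.1 + t * Real.cos s₂) - (P.1 + t * Real.cos (s₂ + w))| := by
    have h1 := cos_sweep hsin hs₂J hs₂wJ (by linarith only [hw0] : s₂ ≤ s₂ + w)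
    have h2 : t * c * w = 2 := by rw [hw_def]; field_simp
    have h3 : (σ:ℝ) * (Real.cos s₂ - Real.cos (s₂+w)) ≤ |Real.cos s₂ - Real.cos (s₂+w)| := by
      calc (σ:ℝ) * (Real.cos s₂ - Real.cos (s₂+w)) ≤ |(σ:ℝ) * (Real.cos s₂ - Real.cos (s₂+w))| :=
            le_abs_self _
        _ = |Real.cos s₂ - Real.cos (s₂+w)| := by rw [abs_mul, hσabs, one_mul]
    have h4 : (P.1 + t * Real.cos s₂) - (P.1 + t * Real.cos (s₂ + w))
        = t * (Real.cos s₂ - Real.cos (s₂+w)) := by ring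
    rw [h4, abs_mul, abs_of_pos ht0]
    have h5 := mul_le_mul_of_nonneg_left h3 (le_of_lt ht0)
    have h6 := mul_le_mul_of_nonneg_left h1 (le_of_lt ht0)
    nlinarith only [h2, h5, h6]
  obtain ⟨m₁, hm₁⟩ := exists_int_shift Q.1
      (min (P.1 + t * Real.cos s₂) (P.1 + t * Real.cos (s₂ + w)))
      (max (P.1 + t * Real.cos s₂) (P.1 + t * Real.cos (s₂ + w)))
      (by
        rcases le_total (P.1 + t * Real.cos s₂) (P.1 + t * Real.cos (s₂ + w)) with h | h
        · rw [min_eq_left h, max_eq_right h]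
          rw [abs_of_nonpos (by linarith only [h])] at hgap
          linarith only [hgap]
        · rw [min_eq_right h, max_eq_left h]
          rw [abs_of_nonneg (by linarith only [h])] at hgap
          linarith only [hgap])
  obtain ⟨s₀, hs₀u, hs₀⟩ :=
    intermediate_value_uIcc (a := s₂) (b := s₂ + w)
      (f := fun s => P.1 + t * Real.cos s)
      ((continuous_const.add (continuous_const.mul Real.continuous_cos)).continuousOn)
      (by
        rcases le_total (P.1 + t * Real.cos s₂) (P.1 + t * Real.cos (s₂ + w)) with h | h
        · rw [Set.uIcc_of_le h]
          rw [min_eq_left h, max_eq_right h] at hm₁; exact hm₁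
        · rw [Set.uIcc_of_ge h]
          rw [min_eq_right h, max_eq_left h] at hm₁; exact hm₁)
  have hs₀mem : s₀ ∈ Set.Icc s₂ (s₂ + w) := by
    rwa [Set.uIcc_of_le (by linarith only [hw0] : s₂ ≤ s₂ + w)] at hs₀u
  have hs₀J : s₀ ∈ Set.Icc a b := hs₂w_sub hs₀mem
  have hx0 : P.1 + t * Real.cos s₀ = Q.1 + m₁ := hs₀
  -- Step 6: choose k via modular arithmetic
  haveI : Fact (Nat.Prime q) := ⟨hqprime⟩
  haveI : NeZero q := ⟨hqprime.ne_zero⟩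
  obtain ⟨r, hr_def⟩ : ∃ x : ℝ, x = Q.2 - P.2 - t * Real.sin s₀ := ⟨_, rfl⟩
  obtain ⟨N, hN_def⟩ : ∃ x : ℤ, x = round ((q:ℝ) * r) := ⟨_, rfl⟩
  have hσint : σ = 1 ∨ σ = -1 := by
    by_cases h : 0 < Real.sin s₁ <;> simp [hσ_def, h]
  have hσp : ((σ * p : ℤ) : ZMod q) ≠ 0 := by
    rw [Ne, ZMod.intCast_zmod_eq_zero_iff_dvd]
    intro hdvd
    apply hpnd
    rcases hσint with h | h <;> rw [h] at hdvd
    · simpa using hdvd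
    · rw [show ((-1) * p : ℤ) = -p by ring] at hdvd
      exact (dvd_neg).mp hdvd
  obtain ⟨kZ, hkZ_def⟩ : ∃ x : ZMod q, x = (((σ * p : ℤ) : ZMod q))⁻¹ * ((N : ℤ) : ZMod q) :=
    ⟨_, rfl⟩
  obtain ⟨k, hk_def⟩ : ∃ x : ℕ, x = kZ.val := ⟨_, rfl⟩
  have hkq : k < q := by rw [hk_def]; exact ZMod.val_lt kZ
  have hsolve : ∃ e : ℤ, (σ * k * p : ℤ) = N + e * q := by
    have h1 : ((σ * (k:ℤ) * p - N : ℤ) : ZMod q) = 0 := by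
      push_cast
      have hval : ((k:ℕ) : ZMod q) = kZ := by
        rw [hk_def, ZMod.natCast_val, ZMod.cast_id]
      rw [hval, hkZ_def]
      have h2 : (σ : ZMod q) * ((((σ * p : ℤ) : ZMod q))⁻¹ * ((N:ℤ) : ZMod q)) * (p : ZMod q)
          = (((σ * p : ℤ) : ZMod q) * (((σ * p : ℤ) : ZMod q))⁻¹) * ((N:ℤ) : ZMod q) := by
        push_cast; ring
      rw [h2, mul_inv_cancel₀ hσp, one_mul, sub_self]
    rw [ZMod.intCast_zmod_eq_zero_iff_dvd] at h1
    obtain ⟨e, he⟩ := h1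
    exact ⟨e, by linarith only [he]⟩
  -- Step 7: the right endpoint b' and the sweep bound
  obtain ⟨b', hb'_def⟩ : ∃ x : ℝ, x = s₂ + W := ⟨_, rfl⟩
  have hb'J : b' ∈ Set.Icc a b := by
    rw [hb'_def]
    exact ⟨by linarith only [hs₂J.1, hW], by linarith only [hs₂a', ha'wb]⟩
  have hs₀b' : s₀ ≤ b' := by rw [hb'_def]; linarith only [hs₀mem.2, hwW, hW]
  have hφb' : (q:ℝ) ≤ (σ:ℝ) * (t * Real.cos s₀ - t * Real.cos b') := by
    have h1 := cos_sweep hsin hs₀J hb'J hs₀b'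
    have h2 : W - w ≤ b' - s₀ := by rw [hb'_def]; linarith [hs₀mem.2]
    have h3 : (σ:ℝ) * (t * Real.cos s₀ - t * Real.cos b')
        = t * ((σ:ℝ) * (Real.cos s₀ - Real.cos b')) := by ring
    rw [h3]
    have h4 := mul_le_mul_of_nonneg_left h1 (le_of_lt ht0)
    have h5 : t * (c * (b' - s₀)) ≥ t * c * (W - w) := by
      nlinarith only [h2, mul_pos ht0 hc]
    linarith only [h4, h5, hsweep]
  -- Step 8: the chain of points with exact x-coordinate steps
  have key : ∀ j : ℕ, j ≤ k → ∃ s', s' ∈ Set.Icc s₀ b' ∧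
      t * Real.cos s' = t * Real.cos s₀ - (σ:ℝ) * j ∧
      |t * Real.sin s' - t * Real.sin s₀ - (σ:ℝ) * j * ((p:ℝ)/q)| ≤ j * (κ₀ / t) := by
    intro j
    induction j with
    | zero =>
      intro _
      refine ⟨s₀, ⟨le_refl _, hs₀b'⟩, by simp, by simp⟩
    | succ j ih =>
      intro hj1
      obtain ⟨sj, hsjm, hsjc, hsje⟩ := ih (by omega)
      have hsjJ : sj ∈ Set.Icc a b := ⟨le_trans hs₀J.1 hsjm.1, le_trans hsjm.2 hb'J.2⟩
      have hcont : ContinuousOn (fun s => (σ:ℝ) * (t * Real.cos s₀ - t * Real.cos s))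
          (Set.Icc sj b') :=
        (continuous_const.mul (continuous_const.sub
          (continuous_const.mul Real.continuous_cos))).continuousOn
      have hφsj : (σ:ℝ) * (t * Real.cos s₀ - t * Real.cos sj) = j := by
        rw [hsjc]; linear_combination (j:ℝ) * hσσ
      have hjq : (j:ℝ) + 1 ≤ (q:ℝ) := by
        have : j + 1 ≤ q := by omega
        exact_mod_cast this
      obtain ⟨s', hs'm, hs'⟩ := intermediate_value_Icc hsjm.2 hcont
        (⟨by rw [hφsj]; linarith only [], by linarith only [hφb', hjq]⟩ :
          ((j:ℝ)+1) ∈ Set.Icc ((σ:ℝ) * (t * Real.cos s₀ - t * Real.cos sj))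
            ((σ:ℝ) * (t * Real.cos s₀ - t * Real.cos b')))
      have hs'J : s' ∈ Set.Icc a b := ⟨le_trans hsjJ.1 hs'm.1, le_trans hs'm.2 hb'J.2⟩
      have hc' : t * Real.cos s' = t * Real.cos s₀ - (σ:ℝ) * ((j:ℝ)+1) := by
        have h5 : ((σ:ℝ)*(σ:ℝ)) * (t * Real.cos s₀ - t * Real.cos s') = (σ:ℝ)*((j:ℝ)+1) := by
          linear_combination (σ:ℝ) * hs'
        rw [hσσ, one_mul] at h5
        linarith
      have hlt : sj < s' := by
        rcases eq_or_lt_of_le hs'm.1 with h | h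
        · exfalso
          rw [h] at hsjc
          have h10 : ((σ:ℝ)) = 0 := by linarith only [hsjc, hc']
          rcases hσ with hh | hh <;> rw [hh] at h10 <;> norm_num at h10
        · exact h
      have hstepc : t * Real.cos s' = t * Real.cos sj - (σ:ℝ) := by
        rw [hc', hsjc]; push_cast; ring
      obtain ⟨ξ, hξJ, hξx, hξy, hstep⟩ := sin_step hc ht0 hsin hsjJ hs'J hlt hstepc
      -- bound on s' - s₂ and hence on the cotangent error
      have hs's₂ : t * (c * (s' - s₂)) ≤ (q:ℝ) + 2/c := by
        have hs₂s' : s₂ ≤ s' := le_trans (le_trans hs₀mem.1 hsjm.1) (le_of_lt hlt)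
        have h1 := cos_sweep hsin hs₂J hs'J hs₂s'
        have h2 : |Real.cos s₂ - Real.cos s₀| ≤ w := by
          refine le_trans (abs_cos_sub_le _ _) ?_
          rw [abs_of_nonpos (by linarith only [hs₀mem.1] : s₂ - s₀ ≤ 0)]
          linarith only [hs₀mem.2]
        have h3 : (σ:ℝ) * (t * Real.cos s₀ - t * Real.cos s') = (j:ℝ)+1 := hs'
        have h4 : (σ:ℝ) * (Real.cos s₂ - Real.cos s₀) ≤ w := by
          calc (σ:ℝ) * (Real.cos s₂ - Real.cos s₀)
              ≤ |(σ:ℝ) * (Real.cos s₂ - Real.cos s₀)| := le_abs_self _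
            _ = |Real.cos s₂ - Real.cos s₀| := by rw [abs_mul, hσabs, one_mul]
            _ ≤ w := h2
        -- t*c*(s' - s₂) ≤ t*σ(cos s₂ - cos s₀) + (j+1) ≤ t*w + q
        have h5 : t * (c * (s' - s₂)) ≤ t * ((σ:ℝ) * (Real.cos s₂ - Real.cos s')) :=
          mul_le_mul_of_nonneg_left h1 (le_of_lt ht0)
        have h6 : t * ((σ:ℝ) * (Real.cos s₂ - Real.cos s'))
            = t * ((σ:ℝ) * (Real.cos s₂ - Real.cos s₀)) +
              (σ:ℝ) * (t * Real.cos s₀ - t * Real.cos s') := by ring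
        have h7 : t * ((σ:ℝ) * (Real.cos s₂ - Real.cos s₀)) ≤ t * w :=
          mul_le_mul_of_nonneg_left h4 (le_of_lt ht0)
        have htw : t * w = 2 / c := by rw [hw_def]; field_simp
        rw [h6, h3] at h5
        linarith only [h5, h7, htw, hjq]
      have hξs₂ : s₂ ≤ ξ := le_trans (le_trans hs₀mem.1 hsjm.1) hξx
      have hsinξ : Real.sin ξ ≠ 0 := hsinne ξ hξJ
      have hsins₂ : Real.sin s₂ ≠ 0 := hsinne s₂ hs₂J
      have hcot : |Real.cos ξ / Real.sin ξ - (p:ℝ)/q| ≤ κ₀ / t := by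
        rw [← hs₂, cot_sub hsinξ hsins₂, abs_div]
        have h1 : |Real.sin (s₂ - ξ)| ≤ s' - s₂ := by
          refine le_trans Real.abs_sin_le_abs ?_
          rw [abs_of_nonpos (by linarith only [hξs₂] : s₂ - ξ ≤ 0)]
          linarith only [hξy]
        have h2 : c^2 ≤ |Real.sin ξ * Real.sin s₂| := by
          rw [abs_of_nonneg (le_trans (by positivity) (hprod ξ hξJ s₂ hs₂J))]
          exact hprod ξ hξJ s₂ hs₂J
        have hs₂s'' : s₂ ≤ s' := le_trans (le_trans hs₀mem.1 hsjm.1) (le_of_lt hlt)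
        have h3 : |Real.sin (s₂ - ξ)| / |Real.sin ξ * Real.sin s₂| ≤ (s' - s₂) / c^2 := by
          apply div_le_div₀ (by linarith only [hs₂s''] : (0:ℝ) ≤ s' - s₂) h1 (by positivity) h2
        refine le_trans h3 ?_
        rw [hκ₀_def]
        rw [div_le_div_iff₀ (by positivity : (0:ℝ) < c^2) ht0]
        rw [div_mul_eq_mul_div, le_div_iff₀ (pow_pos hc 4)]
        have h4 := mul_le_mul_of_nonneg_right hs's₂ (le_of_lt (pow_pos hc 3))
        have h5 : ((q:ℝ) + 2/c) * c^3 = ((q:ℝ)*c + 2) * c^2 := by field_simp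
        rw [h5] at h4
        nlinarith only [h4]
      refine ⟨s', ⟨le_trans hsjm.1 (le_of_lt hlt), hs'm.2⟩, by push_cast; exact hc', ?_⟩
      have hdecomp : t * Real.sin s' - t * Real.sin s₀ - (σ:ℝ) * ((j:ℕ)+1:ℕ) * ((p:ℝ)/q)
          = (t * Real.sin sj - t * Real.sin s₀ - (σ:ℝ) * j * ((p:ℝ)/q))
            + (σ:ℝ) * (Real.cos ξ / Real.sin ξ - (p:ℝ)/q) := by
        push_cast
        linear_combination hstep
      rw [hdecomp]
      refine le_trans (abs_add_le _ _) ?_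
      have h10 : |(σ:ℝ) * (Real.cos ξ / Real.sin ξ - (p:ℝ)/q)| ≤ κ₀/t := by
        rw [abs_mul, hσabs, one_mul]; exact hcot
      push_cast
      have hκt : 0 ≤ κ₀ / t := le_of_lt (div_pos hκ₀ ht0)
      calc _ ≤ (j:ℝ) * (κ₀/t) + κ₀/t := add_le_add hsje h10
        _ = ((j:ℝ)+1) * (κ₀/t) := by ring
  -- Step 9: conclusion
  obtain ⟨sk, hskm, hskc, hske⟩ := key k (le_refl k)
  obtain ⟨e, he⟩ := hsolve
  have hskJ : sk ∈ Set.Icc a b := ⟨le_trans hs₀J.1 hskm.1, le_trans hskm.2 hb'J.2⟩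
  refine ⟨sk, hJαβ hskJ, -m₁ + σ * k, -e, ?_⟩
  have hxcoord : P.1 + t * Real.cos sk + ((-m₁ + σ * (k:ℤ) : ℤ):ℝ) - Q.1 = 0 := by
    push_cast
    rw [hskc]
    push_cast at hx0 ⊢
    linarith only [hx0]
  have h1 : (σ:ℝ)*(k:ℝ)*((p:ℝ)/q) = (N:ℝ)/q + (e:ℝ) := by
    have he' : ((σ:ℝ)) * (k:ℝ) * (p:ℝ) = (N:ℝ) + (e:ℝ) * (q:ℝ) := by exact_mod_cast he
    field_simp
    linarith only [he']
  have h2 : |(N:ℝ)/q - r| ≤ 1/(2*(q:ℝ)) := by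
    have h3 : |(q:ℝ)*r - N| ≤ 1/2 := by
      rw [hN_def]; exact abs_sub_round _
    have h4 : (N:ℝ)/q - r = -(((q:ℝ)*r - N)/q) := by field_simp; ring
    rw [h4, abs_neg, abs_div, abs_of_pos hq0]
    rw [div_le_div_iff₀ hq0 (by positivity)]
    nlinarith only [h3, hq0]
  have hycoord : |P.2 + t * Real.sin sk + ((-e:ℤ):ℝ) - Q.2| < ε := by
    have hdec : P.2 + t * Real.sin sk + ((-e:ℤ):ℝ) - Q.2
        = (t * Real.sin sk - t * Real.sin s₀ - (σ:ℝ) * k * ((p:ℝ)/q))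
          + ((N:ℝ)/q - r) := by
      push_cast
      rw [hr_def]
      linarith only [h1]
    rw [hdec]
    refine lt_of_le_of_lt (abs_add_le _ _) ?_
    have h5 : (k:ℝ) * (κ₀/t) ≤ (q:ℝ) * (κ₀/t) := by
      have hkq' : (k:ℝ) ≤ (q:ℝ) := by exact_mod_cast le_of_lt hkq
      have hκt : 0 ≤ κ₀ / t := le_of_lt (div_pos hκ₀ ht0)
      nlinarith only [hkq', hκt]
    have h6 : (q:ℝ) * (κ₀/t) = (q:ℝ) * κ₀ / t := by ring
    have h7 : 1/(2*(q:ℝ)) ≤ ε/16 := by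
      rw [div_le_div_iff₀ (by positivity) (by norm_num : (0:ℝ) < 16)]
      rw [div_le_iff₀ hε] at hqε
      linarith only [hqε]
    have h8 := le_trans hske (le_trans h5 (le_of_eq h6))
    calc |t * Real.sin sk - t * Real.sin s₀ - (σ:ℝ) * k * ((p:ℝ)/q)| + |(N:ℝ)/q - r|
        ≤ ε/2 + ε/16 := add_le_add (le_trans h8 hEt) (le_trans h2 h7)
      _ < ε := by linarith only [hε]
  show Real.sqrt _ < ε
  simp only [eDist]
  rw [show (P.1 + t * Real.cos sk + ((-m₁ + σ * (k:ℤ) : ℤ):ℝ) - Q.1) = 0 from hxcoord]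
  rw [show (0:ℝ)^2 + (P.2 + t * Real.sin sk + ((-e:ℤ):ℝ) - Q.2)^2
      = (P.2 + t * Real.sin sk + ((-e:ℤ):ℝ) - Q.2)^2 from by ring]
  rw [Real.sqrt_sq_eq_abs]
  exact hycoord
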